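/- Let k, n, ℓ, d be natural numbers with ℓ ≥ 1, and let H ⊆ [k]^n be a class of functions whose ℓ-DS dimension is at most d. Then |H| ≤ Σ_{i=0}^{d} C(n,i) · (k−ℓ)^i · ℓ^{n−i}. -/

import Mathlib

/-- `B` is an `ℓ`-pseudo-cube: `B` is nonempty and for every `v ∈ B` and every coordinate
`i`, there exist at least `ℓ - 1` distinct vectors `u ∈ B` with `u ≠ v` that agree with `v`
on all coordinates except (possibly) `i`. -/
def IsPseudoCube {ι α : Type*} (ℓ : ℕ) (B : Set (ι → α)) : Prop :=
  B.Nonempty ∧ ∀ v ∈ B, ∀ i : ι, ∃ U : Finset (ι → α), U.card = ℓ - 1 ∧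
    ∀ u ∈ U, u ∈ B ∧ u ≠ v ∧ ∀ j, j ≠ i → u j = v j

/-- The coordinate set `I ⊆ [n]` is `ℓ`-DS-shattered by `H ⊆ [k]^n`: the projection of `H`
onto the coordinates in `I` contains an `(ℓ+1)`-pseudo-cube. -/
def DSShattered {n k : ℕ} (ℓ : ℕ) (H : Set (Fin n → Fin k)) (I : Finset (Fin n)) : Prop :=
  ∃ B : Set ({ i // i ∈ I } → Fin k),
    B ⊆ (fun h (i : { i // i ∈ I }) => h i.1) '' H ∧ IsPseudoCube (ℓ + 1) B

open Finset

namespace DSSauerAux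

variable {k n : ℕ}

/-- If the first `m` power-moments of `h : Fin k → ℚ` vanish and the support of `h` has
at most `m` elements, then `h` is identically zero. -/
lemma moments_zero {m : ℕ} (h : Fin k → ℚ)
    (hm : ∀ s < m, ∑ b : Fin k, ((b : ℕ) : ℚ) ^ s * h b = 0)
    (hcard : (univ.filter fun b => h b ≠ 0).card ≤ m) : ∀ b, h b = 0 := by
  by_contra hc
  push_neg at hc
  obtain ⟨b₀, hb₀⟩ := hc
  classical
  set T : Finset (Fin k) := (univ.filter fun b => h b ≠ 0).erase b₀ with hT
  have hb₀mem : b₀ ∈ univ.filter fun b => h b ≠ 0 := by simp [hb₀]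
  have hTcard : T.card = (univ.filter fun b => h b ≠ 0).card - 1 :=
    Finset.card_erase_of_mem hb₀mem
  have hm1 : 1 ≤ (univ.filter fun b => h b ≠ 0).card := Finset.card_pos.mpr ⟨b₀, hb₀mem⟩
  set p : Polynomial ℚ := ∏ b ∈ T, (Polynomial.X - Polynomial.C ((b : ℕ) : ℚ)) with hp
  have hdeg : p.natDegree < m := by
    have : p.natDegree ≤ T.card := by
      refine le_trans (Polynomial.natDegree_prod_le _ _) ?_
      have h1 : ∑ b ∈ T, (Polynomial.X - Polynomial.C ((b : ℕ) : ℚ)).natDegree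
          = ∑ _b ∈ T, 1 :=
        Finset.sum_congr rfl fun b _ => Polynomial.natDegree_X_sub_C _
      rw [h1, Finset.sum_const, smul_eq_mul, mul_one]
    omega
  have key : ∑ b : Fin k, p.eval ((b : ℕ) : ℚ) * h b = 0 := by
    have : ∀ b : Fin k, p.eval ((b : ℕ) : ℚ) =
        ∑ s ∈ Finset.range m, p.coeff s * ((b : ℕ) : ℚ) ^ s := by
      intro b
      exact Polynomial.eval_eq_sum_range' hdeg _
    calc ∑ b : Fin k, p.eval ((b : ℕ) : ℚ) * h b
        = ∑ b : Fin k, ∑ s ∈ Finset.range m, p.coeff s * (((b : ℕ) : ℚ) ^ s * h b) := by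
          refine Finset.sum_congr rfl fun b _ => ?_
          rw [this b, Finset.sum_mul]
          exact Finset.sum_congr rfl fun s _ => by ring
      _ = ∑ s ∈ Finset.range m, p.coeff s * ∑ b : Fin k, ((b : ℕ) : ℚ) ^ s * h b := by
          rw [Finset.sum_comm]
          exact Finset.sum_congr rfl fun s _ => by rw [Finset.mul_sum]
      _ = 0 := by
          refine Finset.sum_eq_zero fun s hs => ?_
          rw [hm s (Finset.mem_range.mp hs), mul_zero]
  have key2 : ∑ b : Fin k, p.eval ((b : ℕ) : ℚ) * h b = p.eval ((b₀ : ℕ) : ℚ) * h b₀ := by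
    refine Finset.sum_eq_single b₀ (fun b _ hbne => ?_) (fun hb => absurd (Finset.mem_univ b₀) hb)
    by_cases hhb : h b = 0
    · rw [hhb, mul_zero]
    · have hbT : b ∈ T := by simp [hT, hbne, hhb]
      have : p.eval ((b : ℕ) : ℚ) = 0 := by
        rw [hp, Polynomial.eval_prod]
        exact Finset.prod_eq_zero hbT (by simp)
      rw [this, zero_mul]
  have hpe : p.eval ((b₀ : ℕ) : ℚ) ≠ 0 := by
    rw [hp, Polynomial.eval_prod]
    refine Finset.prod_ne_zero_iff.mpr fun b hbT => ?_
    have hbne : b ≠ b₀ := (Finset.mem_erase.mp hbT).1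
    have hval : ((b : ℕ) : ℚ) ≠ ((b₀ : ℕ) : ℚ) := by
      intro hh
      exact hbne (Fin.ext (by exact_mod_cast hh))
    simp only [Polynomial.eval_sub, Polynomial.eval_X, Polynomial.eval_C]
    exact sub_ne_zero.mpr fun hh => hval hh.symm
  rw [key2] at key
  exact hb₀ (by
    rcases mul_eq_zero.mp key with h1 | h2
    · exact absurd h1 hpe
    · exact h2)

variable {H : Finset (Fin n → Fin k)} {c : (Fin n → Fin k) → ℚ}

open Classical in
/-- Mixed indicator/moment sums. -/
noncomputable def mm (H : Finset (Fin n → Fin k)) (c : (Fin n → Fin k) → ℚ)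
    (S : Finset (Fin n)) (y : Fin n → Fin k) (t : Fin n → ℕ) : ℚ :=
  ∑ v ∈ H, c v * ∏ i,
    (if i ∈ S then (if v i = y i then (1 : ℚ) else 0) else ((v i : ℕ) : ℚ) ^ t i)

open Classical in
lemma mm_recur (S : Finset (Fin n)) (j : Fin n) (hj : j ∈ S)
    (y : Fin n → Fin k) (t : Fin n → ℕ) (s : ℕ) :
    ∑ b : Fin k, ((b : ℕ) : ℚ) ^ s * mm H c S (Function.update y j b) t
      = mm H c (S.erase j) y (Function.update t j s) := by
  unfold mm
  have hpush : ∀ b : Fin k,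
      ((b : ℕ) : ℚ) ^ s * ∑ v ∈ H, c v * ∏ i,
        (if i ∈ S then (if v i = Function.update y j b i then (1 : ℚ) else 0)
          else ((v i : ℕ) : ℚ) ^ t i)
      = ∑ v ∈ H, ((b : ℕ) : ℚ) ^ s * (c v * ∏ i,
        (if i ∈ S then (if v i = Function.update y j b i then (1 : ℚ) else 0)
          else ((v i : ℕ) : ℚ) ^ t i)) := fun b => Finset.mul_sum _ _ _
  rw [Finset.sum_congr rfl fun b _ => hpush b, Finset.sum_comm]
  refine Finset.sum_congr rfl fun v _ => ?_
  have hsplit : ∀ b : Fin k,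
      (∏ i, (if i ∈ S then (if v i = Function.update y j b i then (1 : ℚ) else 0)
        else ((v i : ℕ) : ℚ) ^ t i))
      = (if v j = b then (1 : ℚ) else 0) *
        ∏ i ∈ Finset.univ.erase j,
          (if i ∈ S then (if v i = y i then (1 : ℚ) else 0) else ((v i : ℕ) : ℚ) ^ t i) := by
    intro b
    rw [← Finset.mul_prod_erase Finset.univ _ (Finset.mem_univ j)]
    congr 1
    · simp [hj]
    · refine Finset.prod_congr rfl fun i hi => ?_
      have hij : i ≠ j := (Finset.mem_erase.mp hi).1
      rw [Function.update_of_ne hij]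
  have hrhs :
      c v * ∏ i, (if i ∈ S.erase j then (if v i = y i then (1 : ℚ) else 0)
          else ((v i : ℕ) : ℚ) ^ Function.update t j s i)
      = c v * (((v j : ℕ) : ℚ) ^ s *
          ∏ i ∈ Finset.univ.erase j,
            (if i ∈ S then (if v i = y i then (1 : ℚ) else 0)
              else ((v i : ℕ) : ℚ) ^ t i)) := by
    congr 1
    rw [← Finset.mul_prod_erase Finset.univ _ (Finset.mem_univ j)]
    congr 1
    · simp [Finset.mem_erase]
    · refine Finset.prod_congr rfl fun i hi => ?_
      have hij : i ≠ j := (Finset.mem_erase.mp hi).1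
      rw [Function.update_of_ne hij]
      simp [Finset.mem_erase, hij]
  rw [hrhs]
  have hl : ∀ b : Fin k, ((b : ℕ) : ℚ) ^ s *
      (c v * ∏ i, (if i ∈ S then (if v i = Function.update y j b i then (1 : ℚ) else 0)
        else ((v i : ℕ) : ℚ) ^ t i))
      = ((b : ℕ) : ℚ) ^ s * (if v j = b then (1 : ℚ) else 0) *
        (c v * ∏ i ∈ Finset.univ.erase j,
          (if i ∈ S then (if v i = y i then (1 : ℚ) else 0)
            else ((v i : ℕ) : ℚ) ^ t i)) := by
    intro b; rw [hsplit b]; ring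
  rw [Finset.sum_congr rfl fun b _ => hl b]
  rw [← Finset.sum_mul]
  have : ∑ b : Fin k, ((b : ℕ) : ℚ) ^ s * (if v j = b then (1 : ℚ) else 0)
      = ((v j : ℕ) : ℚ) ^ s := by
    rw [Finset.sum_eq_single (v j)]
    · simp
    · intro b _ hbne
      rw [if_neg fun hh => hbne hh.symm, mul_zero]
    · intro hh; exact absurd (Finset.mem_univ _) hh
  rw [this]; ring

open Classical in
lemma vanish_small {ℓ d : ℕ} (hℓk : ℓ ≤ k)
    (hmom : ∀ t : Fin n → ℕ, (∀ i, t i < k) →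
      (Finset.univ.filter fun i => ℓ ≤ t i).card ≤ d →
      (∑ v ∈ H, c v * ∏ i, ((v i : ℕ) : ℚ) ^ t i) = 0) :
    ∀ S : Finset (Fin n), ∀ y : Fin n → Fin k, ∀ t : Fin n → ℕ, (∀ i, t i < k) →
      S.card + ((Finset.univ \ S).filter fun i => ℓ ≤ t i).card ≤ d →
      mm H c S y t = 0 := by
  intro S
  induction S using Finset.strongInduction with
  | _ S ih =>
    intro y t htk hbud
    rcases Finset.eq_empty_or_nonempty S with rfl | ⟨j, hj⟩
    · have : mm H c ∅ y t = ∑ v ∈ H, c v * ∏ i, ((v i : ℕ) : ℚ) ^ t i := by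
        unfold mm
        refine Finset.sum_congr rfl fun v _ => ?_
        simp
      rw [this]
      refine hmom t htk ?_
      simpa using hbud
    · set h : Fin k → ℚ := fun b => mm H c S (Function.update y j b) t with hh
      have hz : ∀ b, h b = 0 := by
        refine moments_zero (m := k) h (fun s hs => ?_) ?_
        · rw [hh]
          rw [mm_recur S j hj y t s]
          refine ih (S.erase j) (Finset.erase_ssubset hj) y (Function.update t j s)
            (fun i => ?_) ?_
          · by_cases hij : i = j
            · subst hij; rw [Function.update_self]; exact hs
            · rw [Function.update_of_ne hij]; exact htk i
          · have hcompl : Finset.univ \ S.erase j = insert j (Finset.univ \ S) := by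
              ext i
              simp only [Finset.mem_sdiff, Finset.mem_univ, true_and, Finset.mem_erase,
                Finset.mem_insert]
              constructor
              · intro hi
                by_cases hij : i = j
                · exact Or.inl hij
                · exact Or.inr fun hiS => hi ⟨hij, hiS⟩
              · rintro (rfl | hi)
                · exact fun hcon => hcon.1 rfl
                · exact fun hcon => hi hcon.2
            have hfe : ((Finset.univ \ S).filter fun i => ℓ ≤ Function.update t j s i)
                = (Finset.univ \ S).filter fun i => ℓ ≤ t i := by
              refine Finset.filter_congr fun i hi => ?_
              have hij : i ≠ j := by
                intro hij; subst hij
                exact (Finset.mem_sdiff.mp hi).2 hj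
              rw [Function.update_of_ne hij]
            have hsubs : ((Finset.univ \ S.erase j).filter
                  fun i => ℓ ≤ Function.update t j s i)
                ⊆ insert j ((Finset.univ \ S).filter fun i => ℓ ≤ t i) := by
              intro i hi
              rw [hcompl] at hi
              rcases Finset.mem_filter.mp hi with ⟨hi1, hi2⟩
              rcases Finset.mem_insert.mp hi1 with rfl | hi3
              · exact Finset.mem_insert_self _ _
              · refine Finset.mem_insert_of_mem (Finset.mem_filter.mpr ⟨hi3, ?_⟩)
                have hij : i ≠ j := by
                  intro hij; subst hij
                  exact (Finset.mem_sdiff.mp hi3).2 hj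
                rwa [Function.update_of_ne hij] at hi2
            have hcard1 : ((Finset.univ \ S.erase j).filter
                  fun i => ℓ ≤ Function.update t j s i).card
                ≤ ((Finset.univ \ S).filter fun i => ℓ ≤ t i).card + 1 := by
              refine le_trans (Finset.card_le_card hsubs) ?_
              refine le_trans (Finset.card_insert_le _ _) (le_refl _)
            have hce : (S.erase j).card = S.card - 1 := Finset.card_erase_of_mem hj
            have hpos : 1 ≤ S.card := Finset.card_pos.mpr ⟨j, hj⟩
            omega
        · calc (Finset.univ.filter fun b => h b ≠ 0).card
              ≤ (Finset.univ : Finset (Fin k)).card := Finset.card_filter_le _ _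
            _ = k := by simp
      have h2 : mm H c S (Function.update y j (y j)) t = 0 := hz (y j)
      rwa [Function.update_eq_self] at h2

open Classical in
lemma key {ℓ d : ℕ} (hℓ : 1 ≤ ℓ) (hℓk : ℓ ≤ k)
    (hdim : ∀ I : Finset (Fin n), DSShattered ℓ (H : Set (Fin n → Fin k)) I → I.card ≤ d)
    (hmom : ∀ t : Fin n → ℕ, (∀ i, t i < k) →
      (Finset.univ.filter fun i => ℓ ≤ t i).card ≤ d →
      (∑ v ∈ H, c v * ∏ i, ((v i : ℕ) : ℚ) ^ t i) = 0) :
    ∀ v ∈ H, c v = 0 := by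
  by_contra hcon
  push_neg at hcon
  obtain ⟨v₀, hv₀H, hv₀⟩ := hcon
  set P : Finset (Fin n) → Prop := fun S => ∃ y : Fin n → Fin k, ∃ t : Fin n → ℕ,
    (∀ i, t i < k) ∧ (∀ i, i ∉ S → t i < ℓ) ∧ mm H c S y t ≠ 0 with hP
  have hPuniv : P Finset.univ := by
    refine ⟨v₀, fun _ => 0, fun _ => lt_of_lt_of_le hℓ hℓk, fun _ _ => hℓ, ?_⟩
    have huniv : mm H c Finset.univ v₀ (fun _ => 0) = c v₀ := by
      unfold mm
      rw [Finset.sum_eq_single v₀]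
      · have : ∀ i, ((if i ∈ Finset.univ then (if v₀ i = v₀ i then (1:ℚ) else 0)
            else ((v₀ i : ℕ) : ℚ) ^ (0:ℕ))) = 1 := fun i => by simp
        rw [Finset.prod_congr rfl fun i _ => this i, Finset.prod_const_one, mul_one]
      · intro v hvH hvne
        obtain ⟨i, hi⟩ := Function.ne_iff.mp hvne
        have : (∏ i, (if i ∈ Finset.univ then (if v i = v₀ i then (1:ℚ) else 0)
            else ((v i : ℕ) : ℚ) ^ (0:ℕ))) = 0 :=
          Finset.prod_eq_zero (Finset.mem_univ i) (by simp [hi])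
        rw [this, mul_zero]
      · intro hcon2; exact absurd hv₀H hcon2
    rw [huniv]; exact hv₀
  have hne : {m | ∃ S, P S ∧ S.card = m}.Nonempty := ⟨_, Finset.univ, hPuniv, rfl⟩
  obtain ⟨S₀, hPS₀, hScard⟩ := Nat.sInf_mem hne
  have hmin : ∀ S', P S' → S₀.card ≤ S'.card := by
    intro S' h
    rw [hScard]; exact Nat.sInf_le ⟨S', h, rfl⟩
  obtain ⟨y, t, htk, htl, hmmne⟩ := hPS₀
  have hshat : DSShattered ℓ (H : Set (Fin n → Fin k)) S₀ := by
    refine ⟨{z | ∃ y' : Fin n → Fin k, ∃ t' : Fin n → ℕ, (∀ i, t' i < k) ∧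
        (∀ i, i ∉ S₀ → t' i < ℓ) ∧ mm H c S₀ y' t' ≠ 0 ∧
        z = fun i : {i // i ∈ S₀} => y' i.1}, ?_, ?_, ?_⟩
    · rintro z ⟨y', t', ht'k, ht'ℓ, hmm', rfl⟩
      obtain ⟨v, hvH, hvne⟩ := Finset.exists_ne_zero_of_sum_ne_zero hmm'
      have hvy : ∀ i ∈ S₀, v i = y' i := by
        intro i hi
        by_contra hne2
        apply hvne
        have : (∏ i, (if i ∈ S₀ then (if v i = y' i then (1:ℚ) else 0)
            else ((v i : ℕ) : ℚ) ^ t' i)) = 0 :=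
          Finset.prod_eq_zero (Finset.mem_univ i) (by simp [hi, hne2])
        rw [this, mul_zero]
      refine ⟨v, hvH, ?_⟩
      funext i
      exact hvy i.1 i.2
    · exact ⟨_, y, t, htk, htl, hmmne, rfl⟩
    · rintro z ⟨y', t', ht'k, ht'ℓ, hmm', rfl⟩ i'
      have hjS : i'.1 ∈ S₀ := i'.2
      set h : Fin k → ℚ := fun b => mm H c S₀ (Function.update y' i'.1 b) t' with hhdef
      have hyj : h (y' i'.1) ≠ 0 := by
        show mm H c S₀ (Function.update y' i'.1 (y' i'.1)) t' ≠ 0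
        rwa [Function.update_eq_self]
      have hmom' : ∀ s, s < ℓ → ∑ b : Fin k, ((b : ℕ) : ℚ) ^ s * h b = 0 := by
        intro s hs
        have hrec : ∑ b : Fin k, ((b : ℕ) : ℚ) ^ s * h b
            = mm H c (S₀.erase i'.1) y' (Function.update t' i'.1 s) :=
          mm_recur S₀ i'.1 hjS y' t' s
        rw [hrec]
        by_contra hne2
        have hPe : P (S₀.erase i'.1) := by
          refine ⟨y', Function.update t' i'.1 s, fun i => ?_, fun i hi => ?_, hne2⟩
          · by_cases hij : i = i'.1
            · subst hij; rw [Function.update_self]; exact lt_of_lt_of_le hs hℓk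
            · rw [Function.update_of_ne hij]; exact ht'k i
          · by_cases hij : i = i'.1
            · subst hij; rw [Function.update_self]; exact hs
            · rw [Function.update_of_ne hij]
              refine ht'ℓ i fun hiS => hi (Finset.mem_erase.mpr ⟨hij, hiS⟩)
        have hge := hmin _ hPe
        have hlt : (S₀.erase i'.1).card < S₀.card := Finset.card_erase_lt_of_mem hjS
        omega
      have hyjF : y' i'.1 ∈ Finset.univ.filter fun b => h b ≠ 0 := by
        simp only [Finset.mem_filter]; exact ⟨Finset.mem_univ _, hyj⟩
      have hsupp : ℓ + 1 ≤ (Finset.univ.filter fun b => h b ≠ 0).card := by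
        by_contra hle
        push_neg at hle
        exact hyj (moments_zero (m := ℓ) h hmom' (by omega) (y' i'.1))
      have hcarde : ℓ ≤ ((Finset.univ.filter fun b => h b ≠ 0).erase (y' i'.1)).card := by
        rw [Finset.card_erase_of_mem hyjF]; omega
      obtain ⟨U₀, hU₀sub, hU₀card⟩ :=
        Finset.exists_subset_card_eq hcarde
      have hinj : Function.Injective
          (fun b => fun i : {i // i ∈ S₀} => Function.update y' i'.1 b i.1) := by
        intro b₁ b₂ hb
        have := congrFun hb i'
        simpa using this
      refine ⟨U₀.image (fun b => fun i : {i // i ∈ S₀} => Function.update y' i'.1 b i.1),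
        ?_, ?_⟩
      · rw [Finset.card_image_of_injective _ hinj, hU₀card]; omega
      · intro u hu
        obtain ⟨b, hbU₀, rfl⟩ := Finset.mem_image.mp hu
        have hbF := hU₀sub hbU₀
        rw [Finset.mem_erase, Finset.mem_filter] at hbF
        obtain ⟨hbne, _, hhb⟩ := hbF
        refine ⟨⟨Function.update y' i'.1 b, t', ht'k, ht'ℓ, hhb, rfl⟩, ?_, ?_⟩
        · intro heq
          have := congrFun heq i'
          simp only [Function.update_self] at this
          exact hbne this
        · intro i'' hne''
          have hvne : i''.1 ≠ i'.1 := fun hv => hne'' (Subtype.ext hv)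
          show Function.update y' i'.1 b i''.1 = y' i''.1
          rw [Function.update_of_ne hvne]
  have hcard_le := hdim S₀ hshat
  have hfe : ((Finset.univ \ S₀).filter fun i => ℓ ≤ t i) = ∅ := by
    refine Finset.filter_eq_empty_iff.mpr fun i hi => ?_
    have := htl i (Finset.mem_sdiff.mp hi).2
    omega
  have := vanish_small (H := H) (c := c) hℓk hmom S₀ y t htk (by rw [hfe]; simpa using hcard_le)
  exact hmmne this

lemma filter_lt_card {ℓ : ℕ} (hℓk : ℓ ≤ k) :
    ((Finset.univ : Finset (Fin k)).filter fun x : Fin k => (x : ℕ) < ℓ).card = ℓ := by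
  classical
  have himg : (Finset.univ : Finset (Fin ℓ)).image (Fin.castLE hℓk)
      = (Finset.univ : Finset (Fin k)).filter fun x : Fin k => (x : ℕ) < ℓ := by
    ext x
    simp only [Finset.mem_image, Finset.mem_univ, true_and, Finset.mem_filter]
    constructor
    · rintro ⟨a, rfl⟩
      exact a.2
    · intro hx
      exact ⟨⟨(x : ℕ), hx⟩, by apply Fin.ext; rfl⟩
  rw [← himg, Finset.card_image_of_injective _ (Fin.castLE_injective hℓk),
    Finset.card_univ, Fintype.card_fin]

lemma filter_ge_card {ℓ : ℕ} (hℓk : ℓ ≤ k) :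
    ((Finset.univ : Finset (Fin k)).filter fun x : Fin k => ℓ ≤ (x : ℕ)).card = k - ℓ := by
  classical
  have hsum := Finset.card_filter_add_card_filter_not
    (s := (Finset.univ : Finset (Fin k))) (p := fun x => (x : ℕ) < ℓ)
  have hcongr : ((Finset.univ : Finset (Fin k)).filter fun x : Fin k => ¬ ((x : ℕ) < ℓ))
      = (Finset.univ : Finset (Fin k)).filter fun x : Fin k => ℓ ≤ (x : ℕ) := by
    refine Finset.filter_congr fun x _ => ?_
    simp [not_lt]
  rw [hcongr, filter_lt_card hℓk, Finset.card_univ, Fintype.card_fin] at hsum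
  omega

open Classical in
lemma count_W {ℓ d : ℕ} (hℓk : ℓ ≤ k) :
    ((Finset.univ : Finset (Fin n → Fin k)).filter fun α =>
      (Finset.univ.filter fun i => ℓ ≤ ((α i : ℕ))).card ≤ d).card
    ≤ ∑ s ∈ Finset.range (d + 1), Nat.choose n s * (k - ℓ) ^ s * ℓ ^ (n - s) := by
  set t : Finset (Finset (Fin n)) :=
    (Finset.univ : Finset (Fin n)).powerset.filter fun S => S.card ≤ d with ht
  have hmaps : ∀ α ∈ (Finset.univ : Finset (Fin n → Fin k)).filter (fun α =>
      (Finset.univ.filter fun i => ℓ ≤ ((α i : ℕ))).card ≤ d),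
      (Finset.univ.filter fun i => ℓ ≤ ((α i : ℕ))) ∈ t := by
    intro α hα
    rw [ht, Finset.mem_filter, Finset.mem_powerset]
    exact ⟨Finset.subset_univ _, (Finset.mem_filter.mp hα).2⟩
  rw [Finset.card_eq_sum_card_fiberwise hmaps]
  have hfib : ∀ S ∈ t,
      (((Finset.univ : Finset (Fin n → Fin k)).filter fun α =>
        (Finset.univ.filter fun i => ℓ ≤ ((α i : ℕ))).card ≤ d).filter
        fun α => (Finset.univ.filter fun i => ℓ ≤ ((α i : ℕ))) = S).card
      ≤ (k - ℓ) ^ S.card * ℓ ^ (n - S.card) := by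
    intro S hS
    set T : Fin n → Finset (Fin k) := fun i =>
      if i ∈ S then (Finset.univ.filter fun x : Fin k => ℓ ≤ (x : ℕ))
      else (Finset.univ.filter fun x : Fin k => (x : ℕ) < ℓ) with hT
    have hsub : (((Finset.univ : Finset (Fin n → Fin k)).filter fun α =>
        (Finset.univ.filter fun i => ℓ ≤ ((α i : ℕ))).card ≤ d).filter
        fun α => (Finset.univ.filter fun i => ℓ ≤ ((α i : ℕ))) = S)
        ⊆ Fintype.piFinset T := by
      intro α hα
      have hαS : (Finset.univ.filter fun i => ℓ ≤ ((α i : ℕ))) = S :=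
        (Finset.mem_filter.mp hα).2
      rw [Fintype.mem_piFinset]
      intro i
      by_cases hiS : i ∈ S
      · have h3 : i ∈ Finset.univ.filter fun i => ℓ ≤ ((α i : ℕ)) := hαS ▸ hiS
        simp only [hT, hiS, if_true]
        simpa using (Finset.mem_filter.mp h3).2
      · have h3 : i ∉ Finset.univ.filter fun i => ℓ ≤ ((α i : ℕ)) := fun hc => hiS (hαS ▸ hc)
        simp only [Finset.mem_filter, Finset.mem_univ, true_and, not_le] at h3
        simp only [hT, hiS, if_false]
        simpa using h3
    refine le_trans (Finset.card_le_card hsub) ?_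
    rw [Fintype.card_piFinset]
    have hprod : ∏ i, (T i).card = (k - ℓ) ^ S.card * ℓ ^ (n - S.card) := by
      rw [← Finset.prod_sdiff (Finset.subset_univ S)]
      have h1 : ∏ i ∈ S, (T i).card = (k - ℓ) ^ S.card := by
        rw [Finset.prod_congr rfl fun i hi => ?_, Finset.prod_const]
        simp only [hT, hi, if_true]
        exact filter_ge_card hℓk
      have h2 : ∏ i ∈ Finset.univ \ S, (T i).card = ℓ ^ (n - S.card) := by
        rw [Finset.prod_congr rfl fun i hi => ?_, Finset.prod_const]
        · rw [Finset.card_sdiff_of_subset (Finset.subset_univ S), Finset.card_univ, Fintype.card_fin]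
        simp only [hT, (Finset.mem_sdiff.mp hi).2, if_false]
        exact filter_lt_card hℓk
      rw [h2, h1, Nat.mul_comm]
    rw [hprod]
  refine le_trans (Finset.sum_le_sum hfib) ?_
  have hregroup : ∑ S ∈ t, (k - ℓ) ^ S.card * ℓ ^ (n - S.card)
      = ∑ s ∈ Finset.range (d + 1), ∑ S ∈ t.filter fun S => S.card = s,
          (k - ℓ) ^ S.card * ℓ ^ (n - S.card) := by
    refine (Finset.sum_fiberwise_of_maps_to ?_ _).symm
    intro S hS
    rw [Finset.mem_range]
    have := (Finset.mem_filter.mp hS).2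
    omega
  rw [hregroup]
  refine Finset.sum_le_sum fun s hs => ?_
  have hsd : s ≤ d := by
    have := Finset.mem_range.mp hs; omega
  have hfil : t.filter (fun S => S.card = s) = Finset.powersetCard s Finset.univ := by
    ext S
    rw [Finset.mem_filter, ht, Finset.mem_filter, Finset.mem_powerset,
      Finset.mem_powersetCard]
    constructor
    · rintro ⟨⟨h1, _⟩, h3⟩; exact ⟨h1, h3⟩
    · rintro ⟨h1, h2⟩; exact ⟨⟨h1, by omega⟩, h2⟩
  rw [hfil]
  have hconst : ∀ S ∈ Finset.powersetCard s (Finset.univ : Finset (Fin n)),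
      (k - ℓ) ^ S.card * ℓ ^ (n - S.card) = (k - ℓ) ^ s * ℓ ^ (n - s) := by
    intro S hS
    rw [(Finset.mem_powersetCard.mp hS).2]
  rw [Finset.sum_congr rfl hconst, Finset.sum_const, Finset.card_powersetCard,
    Finset.card_univ, Fintype.card_fin, smul_eq_mul]
  rw [mul_assoc]

end DSSauerAux

/-- Sharp Sauer inequality for the `ℓ`-DS dimension: if every `ℓ`-DS-shattered coordinate
set has size at most `d`, then `|H| ≤ ∑_{i=0}^d C(n,i) (k-ℓ)^i ℓ^{n-i}`. -/
theorem ds_sauer_inequality (k n ℓ d : ℕ) (hℓ : 1 ≤ ℓ)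
    (H : Finset (Fin n → Fin k))
    (hdim : ∀ I : Finset (Fin n), DSShattered ℓ (H : Set (Fin n → Fin k)) I → I.card ≤ d) :
    H.card ≤ ∑ i ∈ Finset.range (d + 1), Nat.choose n i * (k - ℓ) ^ i * ℓ ^ (n - i) := by
  classical
  by_cases hkℓ : k < ℓ
  · have h1 : H.card ≤ k ^ n := by
      calc H.card ≤ (Finset.univ : Finset (Fin n → Fin k)).card := Finset.card_le_univ H
        _ = k ^ n := by
          rw [Finset.card_univ, Fintype.card_fun, Fintype.card_fin, Fintype.card_fin]
    have h2 : k ^ n ≤ ℓ ^ n := Nat.pow_le_pow_left (le_of_lt hkℓ) n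
    refine le_trans (le_trans h1 h2) ?_
    have h0 : (0 : ℕ) ∈ Finset.range (d + 1) := by simp
    have hsingle := Finset.single_le_sum
      (f := fun i => Nat.choose n i * (k - ℓ) ^ i * ℓ ^ (n - i))
      (fun i _ => Nat.zero_le _) h0
    simpa using hsingle
  · push_neg at hkℓ
    set p : (Fin n → Fin k) → Prop := fun α =>
      (Finset.univ.filter fun i => ℓ ≤ ((α i : ℕ))).card ≤ d with hp
    let L : ({x // x ∈ H} → ℚ) →ₗ[ℚ] ({α : Fin n → Fin k // p α} → ℚ) :=
      { toFun := fun cc α => ∑ v ∈ H.attach, cc v * ∏ i, ((v.1 i : ℕ) : ℚ) ^ ((α.1 i : ℕ)),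
        map_add' := by
          intro c₁ c₂
          funext α
          simp only [Pi.add_apply]
          rw [← Finset.sum_add_distrib]
          exact Finset.sum_congr rfl fun v _ => by ring,
        map_smul' := by
          intro r cc
          funext α
          simp only [Pi.smul_apply, smul_eq_mul, RingHom.id_apply]
          rw [Finset.mul_sum]
          exact Finset.sum_congr rfl fun v _ => by ring }
    have hLinj : Function.Injective L := by
      rw [← LinearMap.ker_eq_bot]
      refine (Submodule.eq_bot_iff _).mpr fun cc hcc => ?_
      have hcc0 : ∀ α : {α : Fin n → Fin k // p α},
          ∑ v ∈ H.attach, cc v * ∏ i, ((v.1 i : ℕ) : ℚ) ^ ((α.1 i : ℕ)) = 0 := by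
        intro α
        have := LinearMap.mem_ker.mp hcc
        exact congrFun this α
      set cA : (Fin n → Fin k) → ℚ := fun v => if hv : v ∈ H then cc ⟨v, hv⟩ else 0 with hcA
      have hmom : ∀ t : Fin n → ℕ, (∀ i, t i < k) →
          (Finset.univ.filter fun i => ℓ ≤ t i).card ≤ d →
          (∑ v ∈ H, cA v * ∏ i, ((v i : ℕ) : ℚ) ^ t i) = 0 := by
        intro t htk htd
        have hα : p (fun i => (⟨t i, htk i⟩ : Fin k)) := by
          rw [hp]
          simpa using htd
        have h1 := hcc0 ⟨fun i => ⟨t i, htk i⟩, hα⟩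
        rw [← h1, ← Finset.sum_attach H (fun v => cA v * ∏ i, ((v i : ℕ) : ℚ) ^ t i)]
        refine Finset.sum_congr rfl fun v _ => ?_
        rw [hcA]
        simp only [dif_pos v.2]
      have hkey := DSSauerAux.key hℓ hkℓ hdim hmom
      funext v
      have hv := hkey v.1 v.2
      rw [hcA] at hv
      simp only [dif_pos v.2] at hv
      exact hv
    have hrank := LinearMap.finrank_le_finrank_of_injective hLinj
    rw [Module.finrank_fintype_fun_eq_card, Module.finrank_fintype_fun_eq_card] at hrank
    rw [Fintype.card_coe] at hrank
    refine le_trans hrank ?_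
    rw [Fintype.card_subtype]
    exact DSSauerAux.count_W hkℓ
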